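/- Let m₁, m₂ be natural numbers, let n ≥ max{2m₁, m₁ + 2m₂} + 2, and suppose the edges of the complete graph K_n are coloured with red and blue such that there is no monochromatic copy of the double star S(m₁, m₂). Then there is a colour C ∈ {red, blue} such that every vertex of K_n is incident to at most m₁ edges of colour C. -/

import Mathlib

open SimpleGraph

/-- `G` contains a copy of `H` as a subgraph, i.e. there is an injective graph
homomorphism from `H` to `G`. -/
def Contains {V W : Type*} (G : SimpleGraph V) (H : SimpleGraph W) : Prop :=
  ∃ f : H →g G, Function.Injective f

/-- The double star `S(m₁, m₂)`: two adjacent centres `0` and `1`, where centre `0`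
has `m₁` leaves (the vertices `2, …, m₁ + 1`) and centre `1` has `m₂` leaves
(the vertices `m₁ + 2, …, m₁ + m₂ + 1`). -/
def DoubleStar (m₁ m₂ : ℕ) : SimpleGraph (Fin (m₁ + m₂ + 2)) :=
  SimpleGraph.fromRel (fun i j =>
    (i.val = 0 ∧ 0 < j.val ∧ j.val < m₁ + 2) ∨ (i.val = 1 ∧ m₁ + 2 ≤ j.val))

namespace DoubleStarProof

open Finset

variable {V : Type*} [Fintype V] [DecidableEq V]

/-- If `x ~ y`, `x` has at least `m₁` further neighbours, `y` has at least `m₂` further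
neighbours, and the union of the two neighbourhoods is large enough to accommodate all
the leaves, then `G` contains the double star. -/
lemma embed (G : SimpleGraph V) [DecidableRel G.Adj] {m₁ m₂ : ℕ} {x y : V}
    (hadj : G.Adj x y) (h1 : m₁ + 1 ≤ G.degree x) (h2 : m₂ + 1 ≤ G.degree y)
    (h3 : m₁ + m₂ + 2 ≤ (G.neighborFinset x ∪ G.neighborFinset y).card) :
    Contains G (DoubleStar m₁ m₂) := by
  classical
  set Nx := G.neighborFinset x with hNx
  set Ny := G.neighborFinset y with hNy
  have hxy : x ≠ y := G.ne_of_adj hadj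
  have hyNx : y ∈ Nx := (G.mem_neighborFinset x y).2 hadj
  have hxNy : x ∈ Ny := (G.mem_neighborFinset y x).2 hadj.symm
  have hxNx : x ∉ Nx := G.notMem_neighborFinset_self x
  have hyNy : y ∉ Ny := G.notMem_neighborFinset_self y
  set A := Nx.erase y with hAdef
  set B := Ny.erase x with hBdef
  have hcNx : Nx.card = G.degree x := G.card_neighborFinset_eq_degree x
  have hcNy : Ny.card = G.degree y := G.card_neighborFinset_eq_degree y
  have hA : m₁ ≤ A.card := by
    rw [hAdef, card_erase_of_mem hyNx, hcNx]; omega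
  have hB : m₂ ≤ B.card := by
    rw [hBdef, card_erase_of_mem hxNy, hcNy]; omega
  have hAB : m₁ + m₂ ≤ (A ∪ B).card := by
    have hsub : ((Nx ∪ Ny).erase x).erase y ⊆ A ∪ B := by
      intro v hv
      simp only [mem_erase, mem_union] at hv
      rcases hv with ⟨hvy, hvx, hv⟩
      rcases hv with h | h
      · exact mem_union_left _ (mem_erase.2 ⟨hvy, h⟩)
      · exact mem_union_right _ (mem_erase.2 ⟨hvx, h⟩)
    have h4 := card_le_card hsub
    have hx_mem : x ∈ Nx ∪ Ny := mem_union_right _ hxNy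
    have hy_mem : y ∈ (Nx ∪ Ny).erase x := mem_erase.2 ⟨fun h => hxy h.symm, mem_union_left _ hyNx⟩
    have h5 := card_erase_add_one hx_mem
    have h6 := card_erase_add_one hy_mem
    omega
  -- select the leaf sets
  have key : ∃ S₁ S₂ : Finset V, S₁ ⊆ A ∧ S₂ ⊆ B ∧ S₁.card = m₁ ∧ S₂.card = m₂ ∧
      Disjoint S₁ S₂ := by
    by_cases h : m₁ ≤ (A \ B).card
    · obtain ⟨S₁, hs1, hc1⟩ := exists_subset_card_eq h
      obtain ⟨S₂, hs2, hc2⟩ := exists_subset_card_eq (s := B) hB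
      refine ⟨S₁, S₂, hs1.trans (sdiff_subset), hs2, hc1, hc2, ?_⟩
      exact sdiff_disjoint.mono hs1 hs2
    · push_neg at h
      have hABi : (A \ B).card + (A ∩ B).card = A.card := card_sdiff_add_card_inter A B
      have hD : m₁ - (A \ B).card ≤ (A ∩ B).card := by omega
      obtain ⟨D, hD1, hD2⟩ := exists_subset_card_eq (s := A ∩ B) hD
      have hDB : D ⊆ B := hD1.trans inter_subset_right
      have hdisjCD : Disjoint (A \ B) D := sdiff_disjoint.mono_right hDB
      have hunion : (A \ B).card + B.card = (A ∪ B).card := card_sdiff_add_card A B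
      have hBD : m₂ ≤ (B \ D).card := by
        have := card_le_card_sdiff_add_card (s := B) (t := D)
        have hDc : D.card = m₁ - (A \ B).card := hD2
        have : (B \ D).card + D.card = B.card := by
          rw [card_sdiff_add_card]
          rw [union_eq_left.2 hDB]
        omega
      obtain ⟨S₂, hs2, hc2⟩ := exists_subset_card_eq hBD
      refine ⟨(A \ B) ∪ D, S₂, ?_, hs2.trans sdiff_subset, ?_, hc2, ?_⟩
      · exact union_subset sdiff_subset (hD1.trans inter_subset_left)
      · rw [card_union_of_disjoint hdisjCD, hD2]; omega
      · have h1 : Disjoint (A \ B) S₂ :=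
          sdiff_disjoint.mono_right (hs2.trans sdiff_subset)
        have h2 : Disjoint D S₂ := disjoint_left.2 (fun v hv hv2 => (mem_sdiff.1 (hs2 hv2)).2 hv)
        exact disjoint_union_left.2 ⟨h1, h2⟩
  obtain ⟨S₁, S₂, hS₁, hS₂, hc₁, hc₂, hdisj⟩ := key
  -- basic membership facts
  have hS₁Nx : ∀ v ∈ S₁, G.Adj x v := fun v hv =>
    (G.mem_neighborFinset x v).1 (mem_of_mem_erase (hS₁ hv))
  have hS₂Ny : ∀ v ∈ S₂, G.Adj y v := fun v hv =>
    (G.mem_neighborFinset y v).1 (mem_of_mem_erase (hS₂ hv))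
  have hxS₁ : x ∉ S₁ := fun h => (hS₁Nx x h).ne rfl
  have hyS₂ : y ∉ S₂ := fun h => (hS₂Ny y h).ne rfl
  have hyS₁ : y ∉ S₁ := fun h => (notMem_erase y Nx) (hS₁ h)
  have hxS₂ : x ∉ S₂ := fun h => (notMem_erase x Ny) (hS₂ h)
  -- enumerations of S₁ and S₂
  let f₁ : Fin m₁ → V := fun k => (S₁.equivFin.symm ⟨k.val, by omega⟩ : S₁)
  let f₂ : Fin m₂ → V := fun k => (S₂.equivFin.symm ⟨k.val, by omega⟩ : S₂)
  have hf₁S : ∀ k, f₁ k ∈ S₁ := fun k => (S₁.equivFin.symm _).2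
  have hf₂S : ∀ k, f₂ k ∈ S₂ := fun k => (S₂.equivFin.symm _).2
  have hf₁inj : Function.Injective f₁ := by
    intro k l h
    have := Subtype.ext (p := (· ∈ S₁)) h
    have h2 := S₁.equivFin.symm.injective this
    simpa [Fin.ext_iff] using congrArg Fin.val h2
  have hf₂inj : Function.Injective f₂ := by
    intro k l h
    have := Subtype.ext (p := (· ∈ S₂)) h
    have h2 := S₂.equivFin.symm.injective this
    simpa [Fin.ext_iff] using congrArg Fin.val h2
  -- the map
  let F : Fin (m₁ + m₂ + 2) → V := fun i =>
    if h0 : (i : ℕ) = 0 then x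
    else if h1 : (i : ℕ) = 1 then y
    else if hlt : (i : ℕ) < m₁ + 2 then f₁ ⟨(i : ℕ) - 2, by omega⟩
    else f₂ ⟨(i : ℕ) - (m₁ + 2), by have := i.isLt; omega⟩
  have hF0 : ∀ i : Fin (m₁ + m₂ + 2), (i : ℕ) = 0 → F i = x := by
    intro i h; simp only [F]; rw [dif_pos h]
  have hF1 : ∀ i : Fin (m₁ + m₂ + 2), (i : ℕ) = 1 → F i = y := by
    intro i h; simp only [F]; rw [dif_neg (by omega), dif_pos h]
  have hFS₁ : ∀ i : Fin (m₁ + m₂ + 2), 2 ≤ (i : ℕ) → (i : ℕ) < m₁ + 2 →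
      ∃ k : Fin m₁, k.val = (i : ℕ) - 2 ∧ F i = f₁ k := by
    intro i h2 hlt
    refine ⟨⟨(i : ℕ) - 2, by omega⟩, rfl, ?_⟩
    simp only [F]; rw [dif_neg (by omega), dif_neg (by omega), dif_pos hlt]
  have hFS₂ : ∀ i : Fin (m₁ + m₂ + 2), m₁ + 2 ≤ (i : ℕ) →
      ∃ k : Fin m₂, k.val = (i : ℕ) - (m₁ + 2) ∧ F i = f₂ k := by
    intro i h2
    refine ⟨⟨(i : ℕ) - (m₁ + 2), by have := i.isLt; omega⟩, rfl, ?_⟩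
    simp only [F]; rw [dif_neg (by omega), dif_neg (by omega), dif_neg (by omega)]
  -- adjacency preservation for the generating relation
  have hrel : ∀ a b : Fin (m₁ + m₂ + 2),
      ((a.val = 0 ∧ 0 < b.val ∧ b.val < m₁ + 2) ∨ (a.val = 1 ∧ m₁ + 2 ≤ b.val)) →
      G.Adj (F a) (F b) := by
    rintro a b (⟨ha, hb1, hb2⟩ | ⟨ha, hb⟩)
    · rw [hF0 a ha]
      by_cases hb : (b : ℕ) = 1
      · rw [hF1 b hb]; exact hadj
      · obtain ⟨k, -, hFb⟩ := hFS₁ b (by omega) hb2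
        rw [hFb]; exact hS₁Nx _ (hf₁S k)
    · rw [hF1 a ha]
      obtain ⟨k, -, hFb⟩ := hFS₂ b hb
      rw [hFb]; exact hS₂Ny _ (hf₂S k)
  -- injectivity
  have hinj : Function.Injective F := by
    have hS₁x : ∀ k, f₁ k ≠ x := fun k h => hxS₁ (h ▸ hf₁S k)
    have hS₁y : ∀ k, f₁ k ≠ y := fun k h => hyS₁ (h ▸ hf₁S k)
    have hS₂x : ∀ k, f₂ k ≠ x := fun k h => hxS₂ (h ▸ hf₂S k)
    have hS₂y : ∀ k, f₂ k ≠ y := fun k h => hyS₂ (h ▸ hf₂S k)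
    have hS₁S₂ : ∀ k l, f₁ k ≠ f₂ l := fun k l h =>
      (disjoint_left.1 hdisj) (hf₁S k) (h ▸ hf₂S l)
    intro a b hab
    have hcases : ∀ i : Fin (m₁ + m₂ + 2),
        (i : ℕ) = 0 ∨ (i : ℕ) = 1 ∨ (2 ≤ (i : ℕ) ∧ (i : ℕ) < m₁ + 2) ∨ m₁ + 2 ≤ (i : ℕ) := by
      intro i; omega
    have ext : (a : ℕ) = (b : ℕ) → a = b := fun h => Fin.ext h
    rcases hcases a with ha | ha | ⟨ha, ha'⟩ | ha <;> rcases hcases b with hb | hb | ⟨hb, hb'⟩ | hb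
    · exact ext (by omega)
    · rw [hF0 a ha, hF1 b hb] at hab; exact absurd hab hxy
    · obtain ⟨k, -, hFb⟩ := hFS₁ b hb hb'
      rw [hF0 a ha, hFb] at hab; exact absurd hab.symm (hS₁x k)
    · obtain ⟨k, -, hFb⟩ := hFS₂ b hb
      rw [hF0 a ha, hFb] at hab; exact absurd hab.symm (hS₂x k)
    · rw [hF1 a ha, hF0 b hb] at hab; exact absurd hab.symm hxy
    · exact ext (by omega)
    · obtain ⟨k, -, hFb⟩ := hFS₁ b hb hb'
      rw [hF1 a ha, hFb] at hab; exact absurd hab.symm (hS₁y k)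
    · obtain ⟨k, -, hFb⟩ := hFS₂ b hb
      rw [hF1 a ha, hFb] at hab; exact absurd hab.symm (hS₂y k)
    · obtain ⟨k, -, hFa⟩ := hFS₁ a ha ha'
      rw [hFa, hF0 b hb] at hab; exact absurd hab (hS₁x k)
    · obtain ⟨k, -, hFa⟩ := hFS₁ a ha ha'
      rw [hFa, hF1 b hb] at hab; exact absurd hab (hS₁y k)
    · obtain ⟨k, hk, hFa⟩ := hFS₁ a ha ha'
      obtain ⟨l, hl, hFb⟩ := hFS₁ b hb hb'
      rw [hFa, hFb] at hab
      have := hf₁inj hab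
      apply ext
      have : k.val = l.val := congrArg Fin.val this
      omega
    · obtain ⟨k, -, hFa⟩ := hFS₁ a ha ha'
      obtain ⟨l, -, hFb⟩ := hFS₂ b hb
      rw [hFa, hFb] at hab; exact absurd hab (hS₁S₂ k l)
    · obtain ⟨k, -, hFa⟩ := hFS₂ a ha
      rw [hFa, hF0 b hb] at hab; exact absurd hab (hS₂x k)
    · obtain ⟨k, -, hFa⟩ := hFS₂ a ha
      rw [hFa, hF1 b hb] at hab; exact absurd hab (hS₂y k)
    · obtain ⟨k, -, hFa⟩ := hFS₂ a ha
      obtain ⟨l, -, hFb⟩ := hFS₁ b hb hb'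
      rw [hFa, hFb] at hab; exact absurd hab.symm (hS₁S₂ l k)
    · obtain ⟨k, hk, hFa⟩ := hFS₂ a ha
      obtain ⟨l, hl, hFb⟩ := hFS₂ b hb
      rw [hFa, hFb] at hab
      have := hf₂inj hab
      apply ext
      have : k.val = l.val := congrArg Fin.val this
      omega
  refine ⟨⟨F, ?_⟩, hinj⟩
  intro a b hab
  rw [DoubleStar, fromRel_adj] at hab
  obtain ⟨-, hab | hab⟩ := hab
  · exact hrel a b hab
  · exact (hrel b a hab).symm

/-- From the absence of a double star, every suitable edge has a small neighbourhood union. -/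
lemma no_big (G : SimpleGraph V) [DecidableRel G.Adj] {m₁ m₂ : ℕ}
    (hnc : ¬ Contains G (DoubleStar m₁ m₂)) {x y : V} (hadj : G.Adj x y)
    (h1 : m₁ + 1 ≤ G.degree x) (h2 : m₂ + 1 ≤ G.degree y) :
    (G.neighborFinset x ∪ G.neighborFinset y).card ≤ m₁ + m₂ + 1 := by
  by_contra hc
  exact hnc (embed G hadj h1 h2 (by omega))

/-- Lower bound for the union of neighbourhoods along an edge. -/
lemma union_lower (G : SimpleGraph V) [DecidableRel G.Adj] {x y : V} (hadj : G.Adj x y) :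
    G.degree y + 1 ≤ (G.neighborFinset x ∪ G.neighborFinset y).card := by
  have hsub : insert y (G.neighborFinset y) ⊆ G.neighborFinset x ∪ G.neighborFinset y :=
    insert_subset (mem_union_left _ ((G.mem_neighborFinset x y).2 hadj)) subset_union_right
  have h := card_le_card hsub
  rwa [card_insert_of_notMem (G.notMem_neighborFinset_self y),
    G.card_neighborFinset_eq_degree y] at h

/-- The key quantitative bound: along an edge `x ~ y` of `G` with both degrees large,
the set of vertices that are `G'`-adjacent to `x` (for `G'` disjoint from `G`)
and `G`-adjacent to `y` is small. -/
lemma key_bound (G G' : SimpleGraph V) [DecidableRel G.Adj] [DecidableRel G'.Adj]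
    {m₁ m₂ : ℕ} (hd : ∀ v w, G'.Adj v w → ¬ G.Adj v w)
    (hnc : ¬ Contains G (DoubleStar m₁ m₂)) {x y : V} (hadj : G.Adj x y)
    (h1 : m₁ + 1 ≤ G.degree x) (h2 : m₂ + 1 ≤ G.degree y) :
    (G'.neighborFinset x ∩ G.neighborFinset y).card + (G.degree x + 1) ≤ m₁ + m₂ + 1 := by
  have h3 := no_big G hnc hadj h1 h2
  have hsub : (G'.neighborFinset x ∩ G.neighborFinset y) ∪ insert x (G.neighborFinset x)
      ⊆ G.neighborFinset x ∪ G.neighborFinset y := by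
    intro v hv
    rcases mem_union.1 hv with hv | hv
    · exact mem_union_right _ (mem_of_mem_inter_right hv)
    · rcases mem_insert.1 hv with rfl | hv
      · exact mem_union_right _ ((G.mem_neighborFinset y v).2 hadj.symm)
      · exact mem_union_left _ hv
  have hdisj : Disjoint (G'.neighborFinset x ∩ G.neighborFinset y)
      (insert x (G.neighborFinset x)) := by
    rw [Finset.disjoint_left]
    intro v hv hv2
    have hadj' : G'.Adj x v := (G'.mem_neighborFinset x v).1 (mem_of_mem_inter_left hv)
    rcases mem_insert.1 hv2 with rfl | hv2
    · exact hadj'.ne rfl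
    · exact hd x v hadj' ((G.mem_neighborFinset x v).1 hv2)
  have hcard := card_le_card hsub
  rw [card_union_of_disjoint hdisj,
    card_insert_of_notMem (G.notMem_neighborFinset_self x),
    G.card_neighborFinset_eq_degree x] at hcard
  omega

/-- Cardinality of an intersection with a neighbourhood as a sum of indicators. -/
lemma inter_card_eq_sum (G : SimpleGraph V) [DecidableRel G.Adj] (v : V) (S : Finset V) :
    (G.neighborFinset v ∩ S).card = ∑ w ∈ S, (if G.Adj v w then 1 else 0) := by
  have h : G.neighborFinset v ∩ S = S.filter (fun w => G.Adj v w) := by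
    ext w; simp [mem_neighborFinset, and_comm]
  rw [h, card_filter]

lemma cross_sym (G : SimpleGraph V) [DecidableRel G.Adj] (S T : Finset V) :
    ∑ x ∈ S, (G.neighborFinset x ∩ T).card = ∑ y ∈ T, (G.neighborFinset y ∩ S).card := by
  simp_rw [inter_card_eq_sum]
  rw [Finset.sum_comm]
  apply Finset.sum_congr rfl
  intro y _
  apply Finset.sum_congr rfl
  intro x _
  simp_rw [G.adj_comm]

lemma cross_total (G : SimpleGraph V) [DecidableRel G.Adj] {S T : Finset V}
    (hdisj : Disjoint S T) :
    ∑ x ∈ S, (G.neighborFinset x ∩ T).card + ∑ y ∈ T, (Gᶜ.neighborFinset y ∩ S).card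
      = S.card * T.card := by
  simp_rw [inter_card_eq_sum]
  rw [Finset.sum_comm (s := T)]
  rw [← Finset.sum_add_distrib]
  have h : ∀ x ∈ S, ((∑ y ∈ T, if G.Adj x y then 1 else 0) +
      ∑ y ∈ T, if Gᶜ.Adj y x then 1 else 0) = T.card := by
    intro x hx
    rw [← Finset.sum_add_distrib]
    rw [Finset.card_eq_sum_ones]
    apply Finset.sum_congr rfl
    intro y hy
    have hxy : x ≠ y := fun h => (disjoint_left.1 hdisj) hx (h ▸ hy)
    by_cases hadj : G.Adj x y
    · have hnc : ¬ Gᶜ.Adj y x := fun h' => ((G.compl_adj y x).1 h').2 hadj.symm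
      simp [hadj, hnc]
    · have hc : Gᶜ.Adj y x := (G.compl_adj y x).2 ⟨fun h => hxy h.symm, fun h => hadj h.symm⟩
      simp [hadj, hc]
  rw [Finset.sum_congr rfl h, Finset.sum_const, smul_eq_mul]

lemma fubini_prod (G G' : SimpleGraph V) [DecidableRel G.Adj] [DecidableRel G'.Adj]
    (S T : Finset V) :
    ∑ x ∈ S, ∑ y ∈ T, (G'.neighborFinset x ∩ G.neighborFinset y).card
      = ∑ v : V, (G'.neighborFinset v ∩ S).card * (G.neighborFinset v ∩ T).card := by
  have hin : ∀ x y : V, (G'.neighborFinset x ∩ G.neighborFinset y).card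
      = ∑ v : V, (if G'.Adj x v then 1 else 0) * (if G.Adj y v then 1 else 0) := by
    intro x y
    have h : G'.neighborFinset x ∩ G.neighborFinset y
        = univ.filter (fun v => G'.Adj x v ∧ G.Adj y v) := by
      ext v; simp [mem_neighborFinset]
    rw [h, card_filter]
    apply Finset.sum_congr rfl
    intro v _
    by_cases h1 : G'.Adj x v <;> by_cases h2 : G.Adj y v <;> simp [h1, h2]
  simp_rw [hin]
  rw [Finset.sum_comm (s := S)]
  have : ∀ y ∈ T, ∑ x ∈ S, ∑ v : V, (if G'.Adj x v then 1 else 0) * (if G.Adj y v then 1 else 0)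
      = ∑ v : V, (∑ x ∈ S, if G'.Adj x v then 1 else 0) * (if G.Adj y v then 1 else 0) := by
    intro y _
    rw [Finset.sum_comm]
    apply Finset.sum_congr rfl
    intro v _
    exact (Finset.sum_mul _ _ _).symm
  rw [Finset.sum_congr rfl this, Finset.sum_comm]
  apply Finset.sum_congr rfl
  intro v _
  rw [← Finset.mul_sum]
  congr 1
  · rw [inter_card_eq_sum]
    apply Finset.sum_congr rfl
    intro x _
    simp_rw [G'.adj_comm]
  · rw [inter_card_eq_sum]
    apply Finset.sum_congr rfl
    intro y _
    simp_rw [G.adj_comm]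

/-- Splitting a finset by adjacency to `v`. -/
lemma split_adj_compl (G : SimpleGraph V) [DecidableRel G.Adj] (v : V) (S : Finset V) :
    (G.neighborFinset v ∩ S).card + (Gᶜ.neighborFinset v ∩ S).card = (S.erase v).card := by
  have hU : (G.neighborFinset v ∩ S) ∪ (Gᶜ.neighborFinset v ∩ S) = S.erase v := by
    ext w
    simp only [mem_union, mem_inter, mem_neighborFinset, mem_erase, compl_adj]
    constructor
    · rintro (⟨h, hw⟩ | ⟨⟨hne, h⟩, hw⟩)
      · exact ⟨h.ne', hw⟩
      · exact ⟨fun he => hne he.symm, hw⟩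
    · rintro ⟨hne, hw⟩
      by_cases h : G.Adj v w
      · exact Or.inl ⟨h, hw⟩
      · exact Or.inr ⟨⟨fun he => hne he.symm, h⟩, hw⟩
  have hd : Disjoint (G.neighborFinset v ∩ S) (Gᶜ.neighborFinset v ∩ S) := by
    rw [Finset.disjoint_left]
    intro w hw hw2
    exact ((G.compl_adj v w).1 ((Gᶜ.mem_neighborFinset v w).1 (mem_of_mem_inter_left hw2))).2
      ((G.mem_neighborFinset v w).1 (mem_of_mem_inter_left hw))
  rw [← card_union_of_disjoint hd, hU]

/-- Splitting a neighbourhood along a partition of the vertex set. -/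
lemma nf_split (G : SimpleGraph V) [DecidableRel G.Adj] (v : V) {S T : Finset V}
    (hU : S ∪ T = univ) (hd : Disjoint S T) :
    (G.neighborFinset v ∩ S).card + (G.neighborFinset v ∩ T).card = G.degree v := by
  have h1 : (G.neighborFinset v ∩ S) ∪ (G.neighborFinset v ∩ T) = G.neighborFinset v := by
    rw [← inter_union_distrib_left, hU, inter_univ]
  have h2 : Disjoint (G.neighborFinset v ∩ S) (G.neighborFinset v ∩ T) :=
    hd.mono inter_subset_right inter_subset_right
  calc (G.neighborFinset v ∩ S).card + (G.neighborFinset v ∩ T).card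
      = ((G.neighborFinset v ∩ S) ∪ (G.neighborFinset v ∩ T)).card :=
        (card_union_of_disjoint h2).symm
    _ = (G.neighborFinset v).card := by rw [h1]
    _ = G.degree v := G.card_neighborFinset_eq_degree v


/-- Lemma A: in a colouring without monochromatic double stars, every `G`-degree is at
most `m₁ + m₂`. -/
lemma degree_le_M (G : SimpleGraph V) [DecidableRel G.Adj] {m₁ m₂ : ℕ}
    (hn1 : 2 * m₁ + 2 ≤ Fintype.card V) (hn2 : m₁ + 2 * m₂ + 2 ≤ Fintype.card V)
    (hred : ¬ Contains G (DoubleStar m₁ m₂)) (hblue : ¬ Contains Gᶜ (DoubleStar m₁ m₂))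
    (v : V) : G.degree v ≤ m₁ + m₂ := by
  by_contra hv
  push_neg at hv
  have hdegsum : ∀ w : V, G.degree w + Gᶜ.degree w + 1 = Fintype.card V := by
    intro w
    have h1 : Gᶜ.degree w = Fintype.card V - 1 - G.degree w :=
      SimpleGraph.degree_compl (G := G) (v := w)
    have h2 : G.degree w < Fintype.card V := G.degree_lt_card_verts w
    omega
  have ha : ∀ y ∈ G.neighborFinset v, G.degree y ≤ m₁ := by
    intro y hy
    by_contra hy2
    push_neg at hy2
    have hadj : G.Adj y v := ((G.mem_neighborFinset v y).1 hy).symm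
    have hub := no_big G hred hadj hy2 (by omega)
    have hlow := union_lower G hadj
    omega
  have hNe : (G.neighborFinset v).Nonempty := by
    rw [← card_pos, G.card_neighborFinset_eq_degree]; omega
  obtain ⟨y, hy⟩ := hNe
  have hadjvy : G.Adj v y := (G.mem_neighborFinset v y).1 hy
  have hdegy : m₂ + 1 ≤ G.degree y := by
    rcases Nat.eq_zero_or_pos m₂ with hm2 | hm2
    · have : 0 < G.degree y := by
        rw [← G.card_neighborFinset_eq_degree]
        exact card_pos.2 ⟨v, (G.mem_neighborFinset y v).2 hadjvy.symm⟩
      omega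
    · have hyd : G.degree y ≤ m₁ := ha y hy
      have hstep : ∃ y₂ ∈ G.neighborFinset v, y₂ ≠ y ∧ ¬ G.Adj y y₂ := by
        have hc1 : (G.neighborFinset v ∩ insert y (G.neighborFinset y)).card ≤ m₁ + 1 := by
          have hc := card_le_card
            (inter_subset_right (s₁ := G.neighborFinset v) (s₂ := insert y (G.neighborFinset y)))
          have hc2 := card_insert_le y (G.neighborFinset y)
          have hc3 := G.card_neighborFinset_eq_degree y
          omega
        have hsd : 0 < (G.neighborFinset v \ insert y (G.neighborFinset y)).card := by
          have h := card_sdiff_add_card_inter (G.neighborFinset v) (insert y (G.neighborFinset y))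
          have hc3 := G.card_neighborFinset_eq_degree v
          omega
        obtain ⟨y₂, hy₂⟩ := card_pos.1 hsd
        rw [mem_sdiff, mem_insert] at hy₂
        refine ⟨y₂, hy₂.1, fun h => hy₂.2 (Or.inl h), fun h => hy₂.2 (Or.inr ?_)⟩
        exact (G.mem_neighborFinset y y₂).2 h
      obtain ⟨y₂, hy₂v, hy₂ney, hy₂nadj⟩ := hstep
      have hcadj : Gᶜ.Adj y y₂ := (G.compl_adj y y₂).2 ⟨fun h => hy₂ney h.symm, hy₂nadj⟩
      have hy₂d : G.degree y₂ ≤ m₁ := ha y₂ hy₂v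
      have h1c : m₁ + 1 ≤ Gᶜ.degree y := by have := hdegsum y; omega
      have h2c : m₂ + 1 ≤ Gᶜ.degree y₂ := by have := hdegsum y₂; omega
      have hub := no_big Gᶜ hblue hcadj h1c h2c
      have hsub2 : univ \ G.neighborFinset y ⊆ Gᶜ.neighborFinset y ∪ Gᶜ.neighborFinset y₂ := by
        intro z hz
        rw [mem_sdiff] at hz
        by_cases hzy : z = y
        · subst hzy
          exact mem_union_right _ ((Gᶜ.mem_neighborFinset y₂ z).2 hcadj.symm)
        · refine mem_union_left _ ((Gᶜ.mem_neighborFinset y z).2 ?_)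
          exact (G.compl_adj y z).2 ⟨fun h => hzy h.symm,
            fun h => hz.2 ((G.mem_neighborFinset y z).2 h)⟩
      have hlow2 := card_le_card hsub2
      rw [card_sdiff_of_subset (subset_univ _), card_univ] at hlow2
      have hc3 := G.card_neighborFinset_eq_degree y
      omega
  have hub := no_big G hred hadjvy (by omega) hdegy
  have hlow := union_lower G hadjvy.symm
  rw [union_comm] at hlow
  omega

end DoubleStarProof

set_option maxHeartbeats 2000000 in
theorem stmt_5 (m₁ m₂ n : ℕ) (hn : max (2 * m₁) (m₁ + 2 * m₂) + 2 ≤ n)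
    (G : SimpleGraph (Fin n)) [DecidableRel G.Adj]
    (hred : ¬ Contains G (DoubleStar m₁ m₂))
    (hblue : ¬ Contains Gᶜ (DoubleStar m₁ m₂)) :
    (∀ v, G.degree v ≤ m₁) ∨ (∀ v, Gᶜ.degree v ≤ m₁) := by
  classical
  open Finset in
  by_contra hcon
  push_neg at hcon
  obtain ⟨⟨u, hu⟩, w, hw⟩ := hcon
  have hn1 : 2 * m₁ + 2 ≤ n := by
    have := le_max_left (2 * m₁) (m₁ + 2 * m₂); omega
  have hn2 : m₁ + 2 * m₂ + 2 ≤ n := by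
    have := le_max_right (2 * m₁) (m₁ + 2 * m₂); omega
  have hcard : Fintype.card (Fin n) = n := Fintype.card_fin n
  have hredc : ¬ Contains Gᶜᶜ (DoubleStar m₁ m₂) := by rw [compl_compl]; exact hred
  have hA : ∀ v, G.degree v ≤ m₁ + m₂ :=
    DoubleStarProof.degree_le_M G (by omega) (by omega) hred hblue
  have hAc : ∀ v, Gᶜ.degree v ≤ m₁ + m₂ :=
    DoubleStarProof.degree_le_M Gᶜ (by omega) (by omega) hblue hredc
  have hdegsum : ∀ v : Fin n, G.degree v + Gᶜ.degree v + 1 = n := by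
    intro v
    have h1 : Gᶜ.degree v = Fintype.card (Fin n) - 1 - G.degree v :=
      SimpleGraph.degree_compl (G := G) (v := v)
    have h2 := G.degree_lt_card_verts v
    omega
  have hcompl_dis : ∀ v w' : Fin n, Gᶜ.Adj v w' → ¬ G.Adj v w' :=
    fun v w' h => ((G.compl_adj v w').1 h).2
  have hcompl_dis' : ∀ v w' : Fin n, G.Adj v w' → ¬ Gᶜ.Adj v w' :=
    fun v w' h h' => ((G.compl_adj v w').1 h').2 h
  -- no vertex is big in both colours
  have hP4 : ∀ v : Fin n, m₁ + 1 ≤ G.degree v → m₁ + 1 ≤ Gᶜ.degree v → False := by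
    intro v hr hb
    have hdisj : Disjoint (G.neighborFinset v) (Gᶜ.neighborFinset v) := by
      rw [Finset.disjoint_left]
      intro z hz hz2
      exact hcompl_dis v z ((Gᶜ.mem_neighborFinset v z).1 hz2)
        ((G.mem_neighborFinset v z).1 hz)
    have hb1 : ∀ y ∈ G.neighborFinset v,
        (G.neighborFinset y ∩ Gᶜ.neighborFinset v).card + (G.degree v + 1) ≤ m₁ + m₂ + 1 := by
      intro y hy
      have hadj : G.Adj v y := (G.mem_neighborFinset v y).1 hy
      have h2 : m₂ + 1 ≤ G.degree y := by have := hAc y; have := hdegsum y; omega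
      have hk := DoubleStarProof.key_bound G Gᶜ hcompl_dis hred hadj hr h2
      rwa [Finset.inter_comm] at hk
    have hb2 : ∀ z ∈ Gᶜ.neighborFinset v,
        (Gᶜ.neighborFinset z ∩ G.neighborFinset v).card + (Gᶜ.degree v + 1) ≤ m₁ + m₂ + 1 := by
      intro z hz
      have hadj : Gᶜ.Adj v z := (Gᶜ.mem_neighborFinset v z).1 hz
      have h2 : m₂ + 1 ≤ Gᶜ.degree z := by have := hA z; have := hdegsum z; omega
      have hk := DoubleStarProof.key_bound Gᶜ G hcompl_dis' hblue hadj hb h2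
      rwa [Finset.inter_comm] at hk
    have hcross := DoubleStarProof.cross_total G hdisj
    have hrM : G.degree v ≤ m₁ + m₂ := hA v
    have hbM : Gᶜ.degree v ≤ m₁ + m₂ := hAc v
    have hs1 : ∑ y ∈ G.neighborFinset v, (G.neighborFinset y ∩ Gᶜ.neighborFinset v).card
        ≤ G.degree v * (m₁ + m₂ - G.degree v) := by
      calc ∑ y ∈ G.neighborFinset v, (G.neighborFinset y ∩ Gᶜ.neighborFinset v).card
          ≤ ∑ _y ∈ G.neighborFinset v, (m₁ + m₂ - G.degree v) :=
            Finset.sum_le_sum (fun y hy => by have := hb1 y hy; omega)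
        _ = G.degree v * (m₁ + m₂ - G.degree v) := by
            rw [Finset.sum_const, smul_eq_mul, G.card_neighborFinset_eq_degree]
    have hs2 : ∑ z ∈ Gᶜ.neighborFinset v, (Gᶜ.neighborFinset z ∩ G.neighborFinset v).card
        ≤ Gᶜ.degree v * (m₁ + m₂ - Gᶜ.degree v) := by
      calc ∑ z ∈ Gᶜ.neighborFinset v, (Gᶜ.neighborFinset z ∩ G.neighborFinset v).card
          ≤ ∑ _z ∈ Gᶜ.neighborFinset v, (m₁ + m₂ - Gᶜ.degree v) :=
            Finset.sum_le_sum (fun z hz => by have := hb2 z hz; omega)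
        _ = Gᶜ.degree v * (m₁ + m₂ - Gᶜ.degree v) := by
            rw [Finset.sum_const, smul_eq_mul, Gᶜ.card_neighborFinset_eq_degree]
    have hmain : G.degree v * Gᶜ.degree v
        ≤ G.degree v * (m₁ + m₂ - G.degree v) + Gᶜ.degree v * (m₁ + m₂ - Gᶜ.degree v) := by
      rw [G.card_neighborFinset_eq_degree, Gᶜ.card_neighborFinset_eq_degree] at hcross
      omega
    have hsum := hdegsum v
    -- pass to the integers
    have hZ : (G.degree v : ℤ) * Gᶜ.degree v ≤
        (G.degree v : ℤ) * ((m₁ + m₂ : ℕ) - G.degree v)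
          + (Gᶜ.degree v : ℤ) * ((m₁ + m₂ : ℕ) - Gᶜ.degree v) := by
      have := hmain
      zify [hrM, hbM] at this
      exact_mod_cast this
    have h3n : 4 * ((m₁ + m₂ : ℕ) : ℤ) + 6 ≤ 3 * (n : ℤ) := by
      have : 4 * (m₁ + m₂) + 6 ≤ 3 * n := by omega
      exact_mod_cast this
    have hsumZ : (G.degree v : ℤ) + Gᶜ.degree v + 1 = n := by exact_mod_cast hsum
    have hrpos : (1 : ℤ) ≤ G.degree v := by exact_mod_cast (by omega : 1 ≤ G.degree v)
    nlinarith [sq_nonneg ((G.degree v : ℤ) - Gᶜ.degree v),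
      sq_nonneg ((G.degree v : ℤ) + Gᶜ.degree v)]
  -- the partition into red-big and blue-big vertices
  set RB := Finset.univ.filter (fun v : Fin n => m₁ + 1 ≤ G.degree v) with hRBdef
  set BB := Finset.univ.filter (fun v : Fin n => ¬ (m₁ + 1 ≤ G.degree v)) with hBBdef
  have hmemRB : ∀ v, v ∈ RB ↔ m₁ + 1 ≤ G.degree v := by
    intro v; simp [hRBdef]
  have hmemBB : ∀ v, v ∈ BB ↔ ¬ (m₁ + 1 ≤ G.degree v) := by
    intro v; simp [hBBdef]
  have hBBblue : ∀ v ∈ BB, m₁ + 1 ≤ Gᶜ.degree v := by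
    intro v hv
    have h1 : ¬ (m₁ + 1 ≤ G.degree v) := (hmemBB v).1 hv
    have := hdegsum v
    omega
  have huRB : u ∈ RB := (hmemRB u).2 hu
  have hwBB : w ∈ BB := by
    rw [hmemBB]
    intro h
    exact hP4 w h hw
  have hab : RB.card + BB.card = n := by
    have := Finset.card_filter_add_card_filter_not
      (s := (Finset.univ : Finset (Fin n))) (p := fun v : Fin n => m₁ + 1 ≤ G.degree v)
    rw [Finset.card_univ, hcard] at this
    exact this
  have ha1 : 1 ≤ RB.card := Finset.card_pos.2 ⟨u, huRB⟩
  have hb1' : 1 ≤ BB.card := Finset.card_pos.2 ⟨w, hwBB⟩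
  have hdisjP : Disjoint RB BB := by
    rw [Finset.disjoint_left]
    intro v hv hv2
    exact (hmemBB v).1 hv2 ((hmemRB v).1 hv)
  have hunionP : RB ∪ BB = Finset.univ :=
    Finset.filter_union_filter_not_eq _ _
  have hneq : ∀ x ∈ RB, ∀ y ∈ BB, x ≠ y := by
    intro x hx y hy h
    exact (hmemBB y).1 hy (h ▸ (hmemRB x).1 hx)
  -- counting functions
  set gg : Fin n → ℕ := fun v => (G.neighborFinset v ∩ BB).card with hggdef
  set cc : Fin n → ℕ := fun v => (G.neighborFinset v ∩ RB).card with hccdef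
  set bbf : Fin n → ℕ := fun v => (Gᶜ.neighborFinset v ∩ RB).card with hbbfdef
  have hid1 : ∀ v, cc v + gg v = G.degree v :=
    fun v => DoubleStarProof.nf_split G v hunionP hdisjP
  have hid2 : ∀ v ∈ RB, cc v + bbf v + 1 = RB.card := by
    intro v hv
    have h : cc v + bbf v = (RB.erase v).card := DoubleStarProof.split_adj_compl G v RB
    have h2 := Finset.card_erase_add_one hv
    omega
  have hid3 : ∀ v ∈ BB, cc v + bbf v = RB.card := by
    intro v hv
    have h : cc v + bbf v = (RB.erase v).card := DoubleStarProof.split_adj_compl G v RB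
    rw [Finset.erase_eq_of_notMem
      (fun hvR => (Finset.disjoint_left.1 hdisjP) hvR hv)] at h
    exact h
  -- the pairwise bounds
  have hpair : ∀ x ∈ RB, ∀ y ∈ BB,
      (Gᶜ.neighborFinset x ∩ G.neighborFinset y).card ≤
        (if G.Adj x y then m₁ + m₂ - G.degree x else m₁ + m₂ - Gᶜ.degree y) := by
    intro x hx y hy
    have hx' : m₁ + 1 ≤ G.degree x := (hmemRB x).1 hx
    have hy' : m₁ + 1 ≤ Gᶜ.degree y := hBBblue y hy
    have hδx : m₂ + 1 ≤ Gᶜ.degree x := by have := hA x; have := hdegsum x; omega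
    have hδy : m₂ + 1 ≤ G.degree y := by have := hAc y; have := hdegsum y; omega
    by_cases hadj : G.Adj x y
    · rw [if_pos hadj]
      have hk := DoubleStarProof.key_bound G Gᶜ hcompl_dis hred hadj hx' hδy
      omega
    · rw [if_neg hadj]
      have hxy : x ≠ y := hneq x hx y hy
      have hcadj : Gᶜ.Adj y x := (G.compl_adj y x).2 ⟨hxy.symm, fun h => hadj h.symm⟩
      have hk := DoubleStarProof.key_bound Gᶜ G hcompl_dis' hblue hcadj hy' hδx
      rw [Finset.inter_comm] at hk
      omega
  -- the master counting inequality, natural number version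
  have hT1 : ∑ x ∈ RB, ∑ y ∈ BB, (Gᶜ.neighborFinset x ∩ G.neighborFinset y).card
      ≤ ∑ x ∈ RB, (m₁ + m₂ - G.degree x) * gg x
        + ∑ y ∈ BB, (m₁ + m₂ - Gᶜ.degree y) * bbf y := by
    have step1 : ∑ x ∈ RB, ∑ y ∈ BB, (Gᶜ.neighborFinset x ∩ G.neighborFinset y).card
        ≤ ∑ x ∈ RB, ∑ y ∈ BB,
          (if G.Adj x y then m₁ + m₂ - G.degree x else m₁ + m₂ - Gᶜ.degree y) :=
      Finset.sum_le_sum (fun x hx => Finset.sum_le_sum (fun y hy => hpair x hx y hy))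
    have step2 : ∑ x ∈ RB, ∑ y ∈ BB,
          (if G.Adj x y then m₁ + m₂ - G.degree x else m₁ + m₂ - Gᶜ.degree y)
        = ∑ x ∈ RB, ∑ y ∈ BB, (if G.Adj x y then m₁ + m₂ - G.degree x else 0)
          + ∑ x ∈ RB, ∑ y ∈ BB, (if G.Adj x y then 0 else m₁ + m₂ - Gᶜ.degree y) := by
      rw [← Finset.sum_add_distrib]
      apply Finset.sum_congr rfl
      intro x _
      rw [← Finset.sum_add_distrib]
      apply Finset.sum_congr rfl
      intro y _
      by_cases hadj : G.Adj x y <;> simp [hadj]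
    have step3 : ∑ x ∈ RB, ∑ y ∈ BB, (if G.Adj x y then m₁ + m₂ - G.degree x else 0)
        = ∑ x ∈ RB, (m₁ + m₂ - G.degree x) * gg x := by
      apply Finset.sum_congr rfl
      intro x _
      rw [hggdef]
      simp only
      rw [DoubleStarProof.inter_card_eq_sum, Finset.mul_sum]
      apply Finset.sum_congr rfl
      intro y _
      by_cases hadj : G.Adj x y <;> simp [hadj]
    have step4 : ∑ x ∈ RB, ∑ y ∈ BB, (if G.Adj x y then 0 else m₁ + m₂ - Gᶜ.degree y)
        = ∑ y ∈ BB, (m₁ + m₂ - Gᶜ.degree y) * bbf y := by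
      rw [Finset.sum_comm]
      apply Finset.sum_congr rfl
      intro y hy
      rw [hbbfdef]
      simp only
      rw [DoubleStarProof.inter_card_eq_sum, Finset.mul_sum]
      apply Finset.sum_congr rfl
      intro x hx
      have hxy : x ≠ y := hneq x hx y hy
      by_cases hadj : G.Adj x y
      · have : ¬ Gᶜ.Adj y x := fun h => hcompl_dis y x h hadj.symm
        simp [hadj, this]
      · have : Gᶜ.Adj y x := (G.compl_adj y x).2 ⟨hxy.symm, fun h => hadj h.symm⟩
        simp [hadj, this]
    rw [step2, step3, step4] at step1
    exact step1
  have hT2 : ∑ x ∈ RB, ∑ y ∈ BB, (Gᶜ.neighborFinset x ∩ G.neighborFinset y).card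
      = ∑ v ∈ RB, bbf v * gg v + ∑ v ∈ BB, bbf v * gg v := by
    rw [DoubleStarProof.fubini_prod G Gᶜ RB BB]
    rw [← Finset.sum_filter_add_sum_filter_not Finset.univ
      (fun v : Fin n => m₁ + 1 ≤ G.degree v) (fun v => bbf v * gg v)]
  -- move to the integers
  set M : ℤ := ((m₁ : ℤ) + m₂) with hMdef
  set a : ℤ := (RB.card : ℤ) with hadef
  set b : ℤ := (BB.card : ℤ) with hbdef
  set E : ℤ := ∑ v ∈ RB, (gg v : ℤ) with hEdef
  set P : ℤ := ∑ v ∈ RB, (gg v : ℤ) ^ 2 with hPdef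
  set Q : ℤ := ∑ v ∈ BB, (cc v : ℤ) ^ 2 with hQdef
  set dl : ℤ := (n : ℤ) - 1 - M with hdldef
  have hE2 : ∑ v ∈ BB, (cc v : ℤ) = E := by
    have h := DoubleStarProof.cross_sym G RB BB
    rw [hEdef]
    have h' : ∑ v ∈ BB, cc v = ∑ v ∈ RB, gg v := by
      rw [hggdef, hccdef]
      simp only
      exact h.symm
    exact_mod_cast congrArg (Nat.cast : ℕ → ℤ) h'
  -- master inequality over ℤ
  have hmaster : P + Q + a * b * dl ≤ (n : ℤ) * E := by
    have hNat : ∑ v ∈ RB, bbf v * gg v + ∑ v ∈ BB, bbf v * gg v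
        ≤ ∑ x ∈ RB, (m₁ + m₂ - G.degree x) * gg x
          + ∑ y ∈ BB, (m₁ + m₂ - Gᶜ.degree y) * bbf y := hT2 ▸ hT1
    have e1 : ((∑ v ∈ RB, bbf v * gg v : ℕ) : ℤ) = ∑ v ∈ RB, (bbf v : ℤ) * (gg v : ℤ) := by
      rw [Nat.cast_sum]
      exact Finset.sum_congr rfl (fun v _ => by rw [Nat.cast_mul])
    have e2 : ((∑ v ∈ BB, bbf v * gg v : ℕ) : ℤ) = ∑ v ∈ BB, (bbf v : ℤ) * (gg v : ℤ) := by
      rw [Nat.cast_sum]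
      exact Finset.sum_congr rfl (fun v _ => by rw [Nat.cast_mul])
    have e3 : ((∑ x ∈ RB, (m₁ + m₂ - G.degree x) * gg x : ℕ) : ℤ)
        = ∑ x ∈ RB, (M - (G.degree x : ℤ)) * (gg x : ℤ) := by
      rw [Nat.cast_sum]
      refine Finset.sum_congr rfl (fun x _ => ?_)
      rw [Nat.cast_mul, Nat.cast_sub (hA x), hMdef]
      push_cast
      ring
    have e4 : ((∑ y ∈ BB, (m₁ + m₂ - Gᶜ.degree y) * bbf y : ℕ) : ℤ)
        = ∑ y ∈ BB, (M - (Gᶜ.degree y : ℤ)) * (bbf y : ℤ) := by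
      rw [Nat.cast_sum]
      refine Finset.sum_congr rfl (fun y _ => ?_)
      rw [Nat.cast_mul, Nat.cast_sub (hAc y), hMdef]
      push_cast
      ring
    have hcastT : ∑ v ∈ RB, (bbf v : ℤ) * (gg v : ℤ) + ∑ v ∈ BB, (bbf v : ℤ) * (gg v : ℤ)
        ≤ ∑ x ∈ RB, (M - (G.degree x : ℤ)) * (gg x : ℤ)
          + ∑ y ∈ BB, (M - (Gᶜ.degree y : ℤ)) * (bbf y : ℤ) := by
      have h := (Nat.cast_le (α := ℤ)).2 hNat
      rw [Nat.cast_add, Nat.cast_add, e1, e2, e3, e4] at h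
      exact h
    have k1 : ∀ v ∈ RB, (bbf v : ℤ) * (gg v : ℤ) - (M - G.degree v) * (gg v : ℤ)
        = (gg v : ℤ) ^ 2 + (a - 1 - M) * (gg v : ℤ) := by
      intro v hv
      have h1 : (cc v : ℤ) + gg v = G.degree v := by exact_mod_cast hid1 v
      have h2 : (cc v : ℤ) + bbf v + 1 = a := by
        rw [hadef]; exact_mod_cast hid2 v hv
      have hb' : (bbf v : ℤ) = a - 1 - cc v := by linarith
      have hg' : (G.degree v : ℤ) = cc v + gg v := by linarith
      rw [hb', hg']
      ring
    have k2 : ∀ v ∈ BB, (bbf v : ℤ) * (gg v : ℤ) - (M - Gᶜ.degree v) * (bbf v : ℤ)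
        = (a - cc v) * (dl - cc v) := by
      intro v hv
      have h1 : (cc v : ℤ) + gg v = G.degree v := by exact_mod_cast hid1 v
      have h3 : (cc v : ℤ) + bbf v = a := by
        rw [hadef]; exact_mod_cast hid3 v hv
      have h4 : (G.degree v : ℤ) + Gᶜ.degree v + 1 = n := by exact_mod_cast hdegsum v
      have hb' : (bbf v : ℤ) = a - cc v := by linarith
      have hg' : (gg v : ℤ) = G.degree v - cc v := by linarith
      have he' : (Gᶜ.degree v : ℤ) = (n : ℤ) - 1 - G.degree v := by linarith
      rw [hb', hg', he', hdldef]
      ring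
    have s1 : ∑ v ∈ RB, ((bbf v : ℤ) * (gg v : ℤ) - (M - G.degree v) * (gg v : ℤ))
        = P + (a - 1 - M) * E := by
      rw [Finset.sum_congr rfl k1, Finset.sum_add_distrib, ← Finset.mul_sum,
        hPdef, hEdef]
    have s2 : ∑ v ∈ BB, ((bbf v : ℤ) * (gg v : ℤ) - (M - Gᶜ.degree v) * (bbf v : ℤ))
        = Q - (a + dl) * E + a * dl * b := by
      rw [Finset.sum_congr rfl k2]
      have expand : ∀ v ∈ BB, (a - (cc v : ℤ)) * (dl - cc v)
          = (cc v : ℤ) ^ 2 - (a + dl) * (cc v : ℤ) + a * dl := by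
        intro v _; ring
      rw [Finset.sum_congr rfl expand]
      rw [Finset.sum_add_distrib, Finset.sum_sub_distrib, ← Finset.mul_sum, hE2,
        Finset.sum_const, hQdef]
      rw [hbdef]
      push_cast
      ring
    have hsub : (∑ v ∈ RB, (bbf v : ℤ) * (gg v : ℤ) - ∑ x ∈ RB, (M - G.degree x) * (gg x : ℤ))
        + (∑ v ∈ BB, (bbf v : ℤ) * (gg v : ℤ) - ∑ y ∈ BB, (M - Gᶜ.degree y) * (bbf y : ℤ))
        ≤ 0 := by linarith
    rw [← Finset.sum_sub_distrib, ← Finset.sum_sub_distrib] at hsub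
    rw [s1, s2] at hsub
    have hn_eq : (M : ℤ) + 1 + dl = n := by rw [hdldef]; ring
    calc P + Q + a * b * dl
        = (P + (a - 1 - M) * E + (Q - (a + dl) * E + a * dl * b)) + (M + 1 + dl) * E := by ring
      _ ≤ 0 + (M + 1 + dl) * E := by linarith
      _ = (n : ℤ) * E := by rw [hn_eq]; ring
  -- Cauchy–Schwarz
  have hcs1 : E ^ 2 ≤ a * P := by
    have := sq_sum_le_card_mul_sum_sq (s := RB) (f := fun v => (gg v : ℤ))
    rw [← hEdef, ← hPdef, ← hadef] at this
    exact this
  have hcs2 : E ^ 2 ≤ b * Q := by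
    have := sq_sum_le_card_mul_sum_sq (s := BB) (f := fun v => (cc v : ℤ))
    rw [hE2, ← hQdef, ← hbdef] at this
    exact this
  -- final contradiction
  have habZ : a + b = n := by rw [hadef, hbdef]; exact_mod_cast hab
  have ha1Z : (1 : ℤ) ≤ a := by rw [hadef]; exact_mod_cast ha1
  have hb1Z : (1 : ℤ) ≤ b := by rw [hbdef]; exact_mod_cast hb1'
  have hdl2 : (n : ℤ) + 2 ≤ 4 * dl := by
    rw [hdldef, hMdef]
    have : 4 * (m₁ + m₂) + 6 ≤ 3 * n := by omega
    have := (by exact_mod_cast this : 4 * ((m₁ : ℤ) + m₂) + 6 ≤ 3 * (n : ℤ))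
    linarith
  have hE0 : 0 ≤ E := Finset.sum_nonneg (fun v _ => by positivity)
  have hP0 : 0 ≤ P := Finset.sum_nonneg (fun v _ => by positivity)
  have hQ0 : 0 ≤ Q := Finset.sum_nonneg (fun v _ => by positivity)
  have m1' : a * b * (P + Q + a * b * dl) ≤ a * b * ((n : ℤ) * E) := by
    apply mul_le_mul_of_nonneg_left hmaster
    positivity
  have m2' : b * E ^ 2 ≤ b * (a * P) := mul_le_mul_of_nonneg_left hcs1 (by linarith)
  have m3' : a * E ^ 2 ≤ a * (b * Q) := mul_le_mul_of_nonneg_left hcs2 (by linarith)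
  have key : (n : ℤ) * (a * b * E - E ^ 2) ≥ a ^ 2 * b ^ 2 * dl := by nlinarith
  have key2 : 4 * (a * b * E - E ^ 2) ≤ (a * b) ^ 2 := by nlinarith [sq_nonneg (a * b - 2 * E)]
  have hn0 : (0 : ℤ) ≤ n := by positivity
  have hab1 : (1 : ℤ) ≤ a * b := by nlinarith
  nlinarith [mul_le_mul_of_nonneg_left key2 hn0, mul_le_mul hab1 hab1 (by linarith) (by linarith),
    mul_le_mul_of_nonneg_left hdl2 (by nlinarith : (0:ℤ) ≤ a ^ 2 * b ^ 2)]
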